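/- Let $Q$ be a positive definite $N\times N$ matrix ($N\geq 3$) whose spectrum is invariant under inversion $\lambda \mapsto \lambda^{-1}$ and with $Q \neq I$. Let $d_1 = \mathrm{Tr}(Q)$ and $\lambda_N = \|Q\|$ the largest eigenvalue. Then $d_1^2 < 4 + (N^2-4)\lambda_N^2$. -/

import Mathlib

open scoped Matrix.Norms.L2Operator ComplexOrder

/-- If `Q` is positive definite `N×N` (`N ≥ 3`), with spectrum invariant under inversion and
`Q ≠ I`, then `(Tr Q)² < 4 + (N² - 4) ‖Q‖²`. -/
theorem stmt2 (N : ℕ) (hN : 3 ≤ N) (Q : Matrix (Fin N) (Fin N) ℂ) (hQ : Q.PosDef)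
    (hsym : ∀ l : ℂ, l ∈ spectrum ℂ Q → l⁻¹ ∈ spectrum ℂ Q)
    (hQne : Q ≠ 1) :
    Q.trace.re ^ 2 < 4 + ((N : ℝ) ^ 2 - 4) * ‖Q‖ ^ 2 := by
  have : Fact (1 ≤ N) := ⟨by omega⟩
  letI : CStarAlgebra (Matrix (Fin N) (Fin N) ℂ) := { }
  have hH : Q.IsHermitian := hQ.1
  have hsa : IsSelfAdjoint Q := hH
  set e := hH.eigenvalues with he
  have hpos : ∀ i, 0 < e i := hQ.eigenvalues_pos
  -- trace = sum of eigenvalues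
  have htr : Q.trace = ∑ i, (e i : ℂ) := by
    conv_lhs => rw [hH.spectral_theorem]
    rw [Unitary.conjStarAlgAut_apply, Matrix.trace_mul_cycle, Unitary.coe_star_mul_self, one_mul, Matrix.trace_diagonal]
    rfl
  have htr_re : Q.trace.re = ∑ i, e i := by
    rw [htr]; simp
  -- spectrum = range of eigenvalues
  have hspec : spectrum ℂ Q = Set.range (fun i => (e i : ℂ)) := by
    conv_lhs => rw [hH.spectral_theorem, Unitary.conjStarAlgAut_apply]
    have h1 : ((hH.eigenvectorUnitary : Matrix (Fin N) (Fin N) ℂ) *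
        Matrix.diagonal (RCLike.ofReal ∘ hH.eigenvalues) *
        (star hH.eigenvectorUnitary : Matrix (Fin N) (Fin N) ℂ))
        = ((Unitary.toUnits hH.eigenvectorUnitary : (Matrix (Fin N) (Fin N) ℂ)ˣ) :
            Matrix (Fin N) (Fin N) ℂ) *
          Matrix.diagonal (RCLike.ofReal ∘ hH.eigenvalues) *
          (((Unitary.toUnits hH.eigenvectorUnitary)⁻¹ : (Matrix (Fin N) (Fin N) ℂ)ˣ) :
            Matrix (Fin N) (Fin N) ℂ) := rfl
    rw [h1, spectrum.units_conjugate, spectrum_diagonal]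
    rfl
  -- a maximal eigenvalue
  obtain ⟨j, -, hj⟩ := Finset.exists_max_image Finset.univ e ⟨⟨0, by omega⟩, Finset.mem_univ _⟩
  have hj : ∀ i, e i ≤ e j := fun i => hj i (Finset.mem_univ i)
  -- ‖Q‖ = e j
  have hnorm : ‖Q‖ = e j := by
    have h1 : spectralRadius ℂ Q = ‖((e j : ℝ) : ℂ)‖₊ := by
      apply le_antisymm
      · rw [spectralRadius]
        refine iSup₂_le fun k hk => ?_
        rw [hspec] at hk
        obtain ⟨i, rfl⟩ := hk
        simp only [ENNReal.coe_le_coe]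
        have : ‖((e i : ℝ) : ℂ)‖ ≤ ‖((e j : ℝ) : ℂ)‖ := by
          simp only [Complex.norm_real, Real.norm_eq_abs,
            abs_of_pos (hpos i), abs_of_pos (hpos j)]
          exact hj i
        exact this
      · rw [spectralRadius]
        have hmem : ((e j : ℝ) : ℂ) ∈ spectrum ℂ Q := by rw [hspec]; exact ⟨j, rfl⟩
        exact le_iSup₂ (f := fun k (_ : k ∈ spectrum ℂ Q) => (‖k‖₊ : ENNReal)) _ hmem
    rw [hsa.spectralRadius_eq_nnnorm] at h1
    have h2 : ‖Q‖ = ‖((e j : ℝ) : ℂ)‖ := congrArg NNReal.toReal (ENNReal.coe_injective h1)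
    rw [h2]
    simp [abs_of_pos (hpos j)]
  -- inverses of eigenvalues are eigenvalues
  have hinv : ∀ i, ∃ i', e i' = (e i)⁻¹ := by
    intro i
    have hmem : ((e i : ℝ) : ℂ) ∈ spectrum ℂ Q := by rw [hspec]; exact ⟨i, rfl⟩
    have h2 := hsym _ hmem
    rw [hspec] at h2
    obtain ⟨i', hi'⟩ := h2
    refine ⟨i', ?_⟩
    have h3 : ((e i' : ℝ) : ℂ) = ((e i : ℝ) : ℂ)⁻¹ := hi'
    rw [← Complex.ofReal_inv] at h3
    exact_mod_cast h3
  -- e j > 1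
  have hLgt : 1 < e j := by
    by_contra hle
    rw [not_lt] at hle
    have hall : ∀ i, e i = 1 := by
      intro i
      obtain ⟨i', hi'⟩ := hinv i
      have h1 : (e i)⁻¹ ≤ 1 := hi' ▸ le_trans (hj i') hle
      have h2 : e i * (e i)⁻¹ = 1 := mul_inv_cancel₀ (ne_of_gt (hpos i))
      have h3 : 1 ≤ e i := by nlinarith [mul_le_mul_of_nonneg_left h1 (le_of_lt (hpos i))]
      exact le_antisymm (le_trans (hj i) hle) h3
    apply hQne
    conv_lhs => rw [hH.spectral_theorem, Unitary.conjStarAlgAut_apply]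
    have hd : Matrix.diagonal (RCLike.ofReal ∘ hH.eigenvalues) =
        (1 : Matrix (Fin N) (Fin N) ℂ) := by
      rw [show RCLike.ofReal ∘ hH.eigenvalues = fun _ : Fin N => (1 : ℂ) from
        funext fun i => by simp [Function.comp, ← he, hall i]]
      exact Matrix.diagonal_one
    rw [hd, mul_one]
    exact hH.eigenvectorUnitary.prop.2
  -- the inverse of the top eigenvalue appears
  obtain ⟨i0, hi0⟩ := hinv j
  -- sum bound
  have hsum : ∑ i, e i ≤ (e j)⁻¹ + ((N : ℝ) - 1) * e j := by
    rw [← Finset.add_sum_erase _ _ (Finset.mem_univ i0), hi0]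
    have h1 : ∑ i ∈ Finset.univ.erase i0, e i ≤ (Finset.univ.erase i0).card • e j :=
      Finset.sum_le_card_nsmul _ _ _ (fun i _ => hj i)
    have h2 : (Finset.univ.erase i0).card = N - 1 := by
      rw [Finset.card_erase_of_mem (Finset.mem_univ _), Finset.card_univ, Fintype.card_fin]
    rw [h2] at h1
    have h3 : ((N - 1 : ℕ) : ℝ) = (N : ℝ) - 1 := by
      have : 1 ≤ N := by omega
      push_cast [this]; ring
    rw [nsmul_eq_mul, h3] at h1
    linarith
  -- final arithmetic
  set L := e j with hL
  set d := Q.trace.re with hd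
  have hd0 : 0 ≤ d := by
    rw [htr_re]
    exact Finset.sum_nonneg fun i _ => le_of_lt (hpos i)
  have hdle : d ≤ L⁻¹ + ((N : ℝ) - 1) * L := by rw [htr_re]; exact hsum
  have hml : L⁻¹ * L = 1 := inv_mul_cancel₀ (by positivity)
  have hm0 : 0 < L⁻¹ := by positivity
  have hm1 : L⁻¹ < 1 := by
    rw [inv_lt_one_iff₀]; right; exact hLgt
  have hm2 : L⁻¹ ^ 2 < 1 := by nlinarith
  have hn : (3 : ℝ) ≤ (N : ℝ) := by exact_mod_cast hN
  have hd2 : d ^ 2 ≤ (L⁻¹ + ((N : ℝ) - 1) * L) ^ 2 := by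
    apply pow_le_pow_left₀ hd0 hdle
  have hkey : (2 * (N : ℝ) - 5) * (L ^ 2 - 1) ≥ 0 := by nlinarith
  rw [hnorm]
  nlinarith [hd2, hml, hm2, hkey, hn, hLgt]
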